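/- The subgroup G consists exactly of those elements of F whose normal form has even length; equivalently, G is the kernel of the homomorphism F → ℤ/2ℤ sending x_0 and x_1 to the generator. In particular, G has index 2 in F. -/

import Mathlib

set_option maxHeartbeats 1000000

noncomputable section

/-- The unit interval `[0,1]` as a type. -/
abbrev I : Type := Set.Icc (0:ℝ) 1

/-- The underlying function of the generator `x₀` of Thompson's group `F`. -/
def x0fun (t : ℝ) : ℝ := if t ≤ 1/4 then 2*t else if t ≤ 1/2 then t + 1/4 else t/2 + 1/2

/-- The inverse of `x0fun`. -/
def x0inv (t : ℝ) : ℝ := if t ≤ 1/2 then t/2 else if t ≤ 3/4 then t - 1/4 else 2*t - 1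

/-- The underlying function of the generator `x₁` of Thompson's group `F`. -/
def x1fun (t : ℝ) : ℝ :=
  if t ≤ 1/2 then t else if t ≤ 5/8 then 2*t - 1/2 else if t ≤ 3/4 then t + 1/8 else t/2 + 1/2

/-- The inverse of `x1fun`. -/
def x1inv (t : ℝ) : ℝ :=
  if t ≤ 1/2 then t else if t ≤ 3/4 then t/2 + 1/4 else if t ≤ 7/8 then t - 1/8 else 2*t - 1

/-- The generator `x₀` of Thompson's group `F`, as a bijection of `[0,1]`. -/
def x₀ : Equiv.Perm I where
  toFun t := ⟨x0fun t.1, by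
    obtain ⟨h0, h1⟩ := Set.mem_Icc.mp t.2
    simp only [Set.mem_Icc, x0fun]
    split_ifs <;> constructor <;> linarith⟩
  invFun t := ⟨x0inv t.1, by
    obtain ⟨h0, h1⟩ := Set.mem_Icc.mp t.2
    simp only [Set.mem_Icc, x0inv]
    split_ifs <;> constructor <;> linarith⟩
  left_inv t := by
    obtain ⟨h0, h1⟩ := Set.mem_Icc.mp t.2
    apply Subtype.ext
    show x0inv (x0fun t.1) = t.1
    simp only [x0fun, x0inv]
    split_ifs <;> linarith
  right_inv t := by
    obtain ⟨h0, h1⟩ := Set.mem_Icc.mp t.2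
    apply Subtype.ext
    show x0fun (x0inv t.1) = t.1
    simp only [x0fun, x0inv]
    split_ifs <;> linarith

/-- The generator `x₁` of Thompson's group `F`, as a bijection of `[0,1]`. -/
def x₁ : Equiv.Perm I where
  toFun t := ⟨x1fun t.1, by
    obtain ⟨h0, h1⟩ := Set.mem_Icc.mp t.2
    simp only [Set.mem_Icc, x1fun]
    split_ifs <;> constructor <;> linarith⟩
  invFun t := ⟨x1inv t.1, by
    obtain ⟨h0, h1⟩ := Set.mem_Icc.mp t.2
    simp only [Set.mem_Icc, x1inv]
    split_ifs <;> constructor <;> linarith⟩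
  left_inv t := by
    obtain ⟨h0, h1⟩ := Set.mem_Icc.mp t.2
    apply Subtype.ext
    show x1inv (x1fun t.1) = t.1
    simp only [x1fun, x1inv]
    split_ifs <;> linarith
  right_inv t := by
    obtain ⟨h0, h1⟩ := Set.mem_Icc.mp t.2
    apply Subtype.ext
    show x1fun (x1inv t.1) = t.1
    simp only [x1fun, x1inv]
    split_ifs <;> linarith

/-- Composition in Thompson's group `F` is from left to right: the product `f·g` in the paper
is the function `t ↦ g (f t)`.  In Lean, `Equiv.Perm` multiplication is composition from right
to left: `(f * g) t = f (g t)`.  Hence a paper product `a₁ a₂ ⋯ aₙ` corresponds to the Lean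
product `aₙ * ⋯ * a₂ * a₁`.

`x i` is the standard generator `x_i` of Thompson's group `F`: here `x_0, x_1` are the explicit
piecewise-linear maps, and for `i ≥ 1`, `x_{i+1} = x_0^{-i} x_1 x_0^{i}` (left-to-right
composition), which in Lean's convention is `x₀ ^ i * x₁ * (x₀ ^ i)⁻¹`. -/
def x (i : ℕ) : Equiv.Perm I := if i = 0 then x₀ else x₀ ^ (i-1) * x₁ * (x₀ ^ (i-1))⁻¹

/-- Thompson's group `F`, realized as the group of increasing piecewise-linear homeomorphisms of
`[0,1]` with dyadic breakpoints and slopes powers of 2; it is generated by `x_0` and `x_1`. -/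
def F : Subgroup (Equiv.Perm I) := Subgroup.closure {x 0, x 1}

/-- The subgroup `G = ⟨x_0x_2, x_1x_2⟩` of `F` (products written left-to-right, so
`x_0x_2` is the Lean element `x 2 * x 0`). -/
def G : Subgroup (Equiv.Perm I) := Subgroup.closure {x 2 * x 0, x 2 * x 1}

/-- Jones' subgroup `F⃗ = ⟨x_0x_1, x_1x_2, x_2x_3⟩` of `F` (products written left-to-right). -/
def JonesF : Subgroup (Equiv.Perm I) := Subgroup.closure {x 1 * x 0, x 2 * x 1, x 3 * x 2}

lemma x_mem_F (i : ℕ) : x i ∈ F := by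
  have h0 : x 0 ∈ F := Subgroup.subset_closure (by simp)
  have h1 : x 1 ∈ F := Subgroup.subset_closure (by simp)
  have hx0 : x₀ ∈ F := by simpa [x] using h0
  have hx1 : x₁ ∈ F := by simpa [x] using h1
  rcases Nat.eq_zero_or_pos i with h | h
  · subst h; exact h0
  · have : x i = x₀ ^ (i-1) * x₁ * (x₀ ^ (i-1))⁻¹ := by
      simp [x, Nat.pos_iff_ne_zero.mp h]
    rw [this]
    exact mul_mem (mul_mem (pow_mem hx0 _) hx1) (inv_mem (pow_mem hx0 _))

lemma y0_mem_G : x 2 * x 0 ∈ G := Subgroup.subset_closure (by simp)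

lemma y1_mem_G : x 2 * x 1 ∈ G := Subgroup.subset_closure (by simp)

/-- The length `|w|` of an element of `F`: the minimal `n` such that `w` is a product of `n`
elements of `{x_i^{±1} : i ≥ 0}`.  This equals the length of the normal form of `w`. -/
def len (w : Equiv.Perm I) : ℕ :=
  sInf {n | ∃ l : List (Equiv.Perm I), l.length = n ∧
    (∀ a ∈ l, ∃ i : ℕ, a = x i ∨ a = (x i)⁻¹) ∧ l.prod = w}

/-- The element of `F` given by the positive word `x_{i_1} x_{i_2} ⋯ x_{i_n}` (composition from
left to right), where `l = [i_1, i_2, …, i_n]`.  Since Lean's multiplication of permutations is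
composition from right to left, this is the Lean product of the reversed list of letters. -/
def pp (l : List ℕ) : Equiv.Perm I := ((l.map x).reverse).prod

/-- `l = [i_1, …, i_n]` encodes a *block*: a positive normal form `x_{i_1}⋯x_{i_n}`
(so `i_1 ≤ ⋯ ≤ i_n`) with `i_1 ≠ i_n` and `i_j < i_1 + j` for all `j = 1, …, n`
(here with 0-based indexing: `l[k] < l[0] + k + 1`). -/
def IsBlock (l : List ℕ) : Prop :=
  l ≠ [] ∧ l.Pairwise (· ≤ ·) ∧ l.headI ≠ l.getLastD 0 ∧
    ∀ k < l.length, l.getD k 0 < l.headI + k + 1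

/-- The double coset `F⃗ a F⃗` of Jones' subgroup.  (As a set this does not depend on the
composition convention, since `u, v` range over all of `F⃗`.) -/
def dCoset (a : Equiv.Perm I) : Set (Equiv.Perm I) :=
  {w | ∃ u ∈ JonesF, ∃ v ∈ JonesF, w = v * a * u}

/-- A real number is dyadic if it has the form `a / 2^n` with `a, n` natural numbers. -/
def IsDyadic (α : ℝ) : Prop := ∃ (a : ℕ) (n : ℕ), α = a / 2^n

/-- The subgroup of all permutations fixing every point of `U`. -/
def fixing (U : Set ℝ) : Subgroup (Equiv.Perm I) where
  carrier := {g | ∀ t : I, (t : ℝ) ∈ U → g t = t}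
  one_mem' := fun _ _ => rfl
  mul_mem' := by
    intro a b ha hb t ht
    simp only [Equiv.Perm.mul_apply]
    rw [hb t ht, ha t ht]
  inv_mem' := by
    intro a ha t ht
    conv_lhs => rw [← ha t ht]
    exact a.symm_apply_apply t

/-- `H_U`: the stabilizer in `F` of the finite set `U ⊂ (0,1)`, i.e. the subgroup of all
elements of `F` fixing every point of `U`. -/
def HU (U : Set ℝ) : Subgroup (Equiv.Perm I) := F ⊓ fixing U

def q1fun (t : ℝ) : ℝ := if t ≤ (1/2) then (1)*t + (0) else if t ≤ (5/8) then (2)*t + (-1/2) else if t ≤ (3/4) then (1)*t + (1/8) else (1/2)*t + (1/2)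

lemma q1lem (t : ℝ) (h0 : 0 ≤ t) (h1 : t ≤ 1) : x1fun t = q1fun t := by
  rcases le_or_gt t (1/2) with hc0 | hc0
  · simp only [x1fun, q1fun]
    rw [if_pos (by linarith : t ≤ (1/2)), if_pos (by linarith : t ≤ (1/2))]
    try ring
  rcases le_or_gt t (5/8) with hc1 | hc1
  · simp only [x1fun, q1fun]
    rw [if_neg (by linarith : ¬ (t ≤ (1/2))), if_pos (by linarith : t ≤ (5/8)), if_neg (by linarith : ¬ (t ≤ (1/2))), if_pos (by linarith : t ≤ (5/8))]
    try ring
  rcases le_or_gt t (3/4) with hc2 | hc2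
  · simp only [x1fun, q1fun]
    rw [if_neg (by linarith : ¬ (t ≤ (1/2))), if_neg (by linarith : ¬ (t ≤ (5/8))), if_pos (by linarith : t ≤ (3/4)), if_neg (by linarith : ¬ (t ≤ (1/2))), if_neg (by linarith : ¬ (t ≤ (5/8))), if_pos (by linarith : t ≤ (3/4))]
    try ring
  · simp only [x1fun, q1fun]
    rw [if_neg (by linarith : ¬ (t ≤ (1/2))), if_neg (by linarith : ¬ (t ≤ (5/8))), if_neg (by linarith : ¬ (t ≤ (3/4))), if_neg (by linarith : ¬ (t ≤ (1/2))), if_neg (by linarith : ¬ (t ≤ (5/8))), if_neg (by linarith : ¬ (t ≤ (3/4)))]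
    try ring

def q2fun (t : ℝ) : ℝ := if t ≤ (1/4) then (2)*t + (0) else if t ≤ (5/8) then (1)*t + (1/4) else if t ≤ (3/4) then (1/2)*t + (9/16) else (1/4)*t + (3/4)

lemma q2lem (t : ℝ) (h0 : 0 ≤ t) (h1 : t ≤ 1) : x0fun (q1fun t) = q2fun t := by
  rcases le_or_gt t (1/4) with hc0 | hc0
  · have e1 : q1fun t = (1)*t + (0) := by
      simp only [q1fun]
      rw [if_pos (by linarith : t ≤ (1/2))]
    rw [e1]
    simp only [x0fun, q2fun]
    rw [if_pos (by linarith : (1)*t + (0) ≤ (1/4)), if_pos (by linarith : t ≤ (1/4))]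
    try ring
  rcases le_or_gt t (1/2) with hc1 | hc1
  · have e1 : q1fun t = (1)*t + (0) := by
      simp only [q1fun]
      rw [if_pos (by linarith : t ≤ (1/2))]
    rw [e1]
    simp only [x0fun, q2fun]
    rw [if_neg (by linarith : ¬ ((1)*t + (0) ≤ (1/4))), if_pos (by linarith : (1)*t + (0) ≤ (1/2)), if_neg (by linarith : ¬ (t ≤ (1/4))), if_pos (by linarith : t ≤ (5/8))]
    try ring
  rcases le_or_gt t (5/8) with hc2 | hc2
  · have e1 : q1fun t = (2)*t + (-1/2) := by
      simp only [q1fun]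
      rw [if_neg (by linarith : ¬ (t ≤ (1/2))), if_pos (by linarith : t ≤ (5/8))]
    rw [e1]
    simp only [x0fun, q2fun]
    rw [if_neg (by linarith : ¬ ((2)*t + (-1/2) ≤ (1/4))), if_neg (by linarith : ¬ ((2)*t + (-1/2) ≤ (1/2))), if_neg (by linarith : ¬ (t ≤ (1/4))), if_pos (by linarith : t ≤ (5/8))]
    try ring
  rcases le_or_gt t (3/4) with hc3 | hc3
  · have e1 : q1fun t = (1)*t + (1/8) := by
      simp only [q1fun]
      rw [if_neg (by linarith : ¬ (t ≤ (1/2))), if_neg (by linarith : ¬ (t ≤ (5/8))), if_pos (by linarith : t ≤ (3/4))]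
    rw [e1]
    simp only [x0fun, q2fun]
    rw [if_neg (by linarith : ¬ ((1)*t + (1/8) ≤ (1/4))), if_neg (by linarith : ¬ ((1)*t + (1/8) ≤ (1/2))), if_neg (by linarith : ¬ (t ≤ (1/4))), if_neg (by linarith : ¬ (t ≤ (5/8))), if_pos (by linarith : t ≤ (3/4))]
    try ring
  · have e1 : q1fun t = (1/2)*t + (1/2) := by
      simp only [q1fun]
      rw [if_neg (by linarith : ¬ (t ≤ (1/2))), if_neg (by linarith : ¬ (t ≤ (5/8))), if_neg (by linarith : ¬ (t ≤ (3/4)))]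
    rw [e1]
    simp only [x0fun, q2fun]
    rw [if_neg (by linarith : ¬ ((1/2)*t + (1/2) ≤ (1/4))), if_neg (by linarith : ¬ ((1/2)*t + (1/2) ≤ (1/2))), if_neg (by linarith : ¬ (t ≤ (1/4))), if_neg (by linarith : ¬ (t ≤ (5/8))), if_neg (by linarith : ¬ (t ≤ (3/4)))]
    try ring

def q3fun (t : ℝ) : ℝ := if t ≤ (3/8) then (2)*t + (0) else if t ≤ (1/2) then (1)*t + (3/8) else if t ≤ (5/8) then (1/2)*t + (5/8) else if t ≤ (3/4) then (1/4)*t + (25/32) else (1/8)*t + (7/8)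

lemma q3lem (t : ℝ) (h0 : 0 ≤ t) (h1 : t ≤ 1) : x1fun (q2fun t) = q3fun t := by
  rcases le_or_gt t (1/4) with hc0 | hc0
  · have e1 : q2fun t = (2)*t + (0) := by
      simp only [q2fun]
      rw [if_pos (by linarith : t ≤ (1/4))]
    rw [e1]
    simp only [x1fun, q3fun]
    rw [if_pos (by linarith : (2)*t + (0) ≤ (1/2)), if_pos (by linarith : t ≤ (3/8))]
    try ring
  rcases le_or_gt t (3/8) with hc1 | hc1
  · have e1 : q2fun t = (1)*t + (1/4) := by
      simp only [q2fun]
      rw [if_neg (by linarith : ¬ (t ≤ (1/4))), if_pos (by linarith : t ≤ (5/8))]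
    rw [e1]
    simp only [x1fun, q3fun]
    rw [if_neg (by linarith : ¬ ((1)*t + (1/4) ≤ (1/2))), if_pos (by linarith : (1)*t + (1/4) ≤ (5/8)), if_pos (by linarith : t ≤ (3/8))]
    try ring
  rcases le_or_gt t (1/2) with hc2 | hc2
  · have e1 : q2fun t = (1)*t + (1/4) := by
      simp only [q2fun]
      rw [if_neg (by linarith : ¬ (t ≤ (1/4))), if_pos (by linarith : t ≤ (5/8))]
    rw [e1]
    simp only [x1fun, q3fun]
    rw [if_neg (by linarith : ¬ ((1)*t + (1/4) ≤ (1/2))), if_neg (by linarith : ¬ ((1)*t + (1/4) ≤ (5/8))), if_pos (by linarith : (1)*t + (1/4) ≤ (3/4)), if_neg (by linarith : ¬ (t ≤ (3/8))), if_pos (by linarith : t ≤ (1/2))]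
    try ring
  rcases le_or_gt t (5/8) with hc3 | hc3
  · have e1 : q2fun t = (1)*t + (1/4) := by
      simp only [q2fun]
      rw [if_neg (by linarith : ¬ (t ≤ (1/4))), if_pos (by linarith : t ≤ (5/8))]
    rw [e1]
    simp only [x1fun, q3fun]
    rw [if_neg (by linarith : ¬ ((1)*t + (1/4) ≤ (1/2))), if_neg (by linarith : ¬ ((1)*t + (1/4) ≤ (5/8))), if_neg (by linarith : ¬ ((1)*t + (1/4) ≤ (3/4))), if_neg (by linarith : ¬ (t ≤ (3/8))), if_neg (by linarith : ¬ (t ≤ (1/2))), if_pos (by linarith : t ≤ (5/8))]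
    try ring
  rcases le_or_gt t (3/4) with hc4 | hc4
  · have e1 : q2fun t = (1/2)*t + (9/16) := by
      simp only [q2fun]
      rw [if_neg (by linarith : ¬ (t ≤ (1/4))), if_neg (by linarith : ¬ (t ≤ (5/8))), if_pos (by linarith : t ≤ (3/4))]
    rw [e1]
    simp only [x1fun, q3fun]
    rw [if_neg (by linarith : ¬ ((1/2)*t + (9/16) ≤ (1/2))), if_neg (by linarith : ¬ ((1/2)*t + (9/16) ≤ (5/8))), if_neg (by linarith : ¬ ((1/2)*t + (9/16) ≤ (3/4))), if_neg (by linarith : ¬ (t ≤ (3/8))), if_neg (by linarith : ¬ (t ≤ (1/2))), if_neg (by linarith : ¬ (t ≤ (5/8))), if_pos (by linarith : t ≤ (3/4))]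
    try ring
  · have e1 : q2fun t = (1/4)*t + (3/4) := by
      simp only [q2fun]
      rw [if_neg (by linarith : ¬ (t ≤ (1/4))), if_neg (by linarith : ¬ (t ≤ (5/8))), if_neg (by linarith : ¬ (t ≤ (3/4)))]
    rw [e1]
    simp only [x1fun, q3fun]
    rw [if_neg (by linarith : ¬ ((1/4)*t + (3/4) ≤ (1/2))), if_neg (by linarith : ¬ ((1/4)*t + (3/4) ≤ (5/8))), if_neg (by linarith : ¬ ((1/4)*t + (3/4) ≤ (3/4))), if_neg (by linarith : ¬ (t ≤ (3/8))), if_neg (by linarith : ¬ (t ≤ (1/2))), if_neg (by linarith : ¬ (t ≤ (5/8))), if_neg (by linarith : ¬ (t ≤ (3/4)))]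
    try ring

def q4fun (t : ℝ) : ℝ := if t ≤ (1/4) then (1)*t + (0) else if t ≤ (1/2) then (2)*t + (-1/4) else if t ≤ (5/8) then (1)*t + (1/4) else if t ≤ (3/4) then (1/2)*t + (9/16) else (1/4)*t + (3/4)

lemma q4lem (t : ℝ) (h0 : 0 ≤ t) (h1 : t ≤ 1) : x0inv (q3fun t) = q4fun t := by
  rcases le_or_gt t (1/4) with hc0 | hc0
  · have e1 : q3fun t = (2)*t + (0) := by
      simp only [q3fun]
      rw [if_pos (by linarith : t ≤ (3/8))]
    rw [e1]
    simp only [x0inv, q4fun]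
    rw [if_pos (by linarith : (2)*t + (0) ≤ (1/2)), if_pos (by linarith : t ≤ (1/4))]
    try ring
  rcases le_or_gt t (3/8) with hc1 | hc1
  · have e1 : q3fun t = (2)*t + (0) := by
      simp only [q3fun]
      rw [if_pos (by linarith : t ≤ (3/8))]
    rw [e1]
    simp only [x0inv, q4fun]
    rw [if_neg (by linarith : ¬ ((2)*t + (0) ≤ (1/2))), if_pos (by linarith : (2)*t + (0) ≤ (3/4)), if_neg (by linarith : ¬ (t ≤ (1/4))), if_pos (by linarith : t ≤ (1/2))]
    try ring
  rcases le_or_gt t (1/2) with hc2 | hc2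
  · have e1 : q3fun t = (1)*t + (3/8) := by
      simp only [q3fun]
      rw [if_neg (by linarith : ¬ (t ≤ (3/8))), if_pos (by linarith : t ≤ (1/2))]
    rw [e1]
    simp only [x0inv, q4fun]
    rw [if_neg (by linarith : ¬ ((1)*t + (3/8) ≤ (1/2))), if_neg (by linarith : ¬ ((1)*t + (3/8) ≤ (3/4))), if_neg (by linarith : ¬ (t ≤ (1/4))), if_pos (by linarith : t ≤ (1/2))]
    try ring
  rcases le_or_gt t (5/8) with hc3 | hc3
  · have e1 : q3fun t = (1/2)*t + (5/8) := by
      simp only [q3fun]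
      rw [if_neg (by linarith : ¬ (t ≤ (3/8))), if_neg (by linarith : ¬ (t ≤ (1/2))), if_pos (by linarith : t ≤ (5/8))]
    rw [e1]
    simp only [x0inv, q4fun]
    rw [if_neg (by linarith : ¬ ((1/2)*t + (5/8) ≤ (1/2))), if_neg (by linarith : ¬ ((1/2)*t + (5/8) ≤ (3/4))), if_neg (by linarith : ¬ (t ≤ (1/4))), if_neg (by linarith : ¬ (t ≤ (1/2))), if_pos (by linarith : t ≤ (5/8))]
    try ring
  rcases le_or_gt t (3/4) with hc4 | hc4
  · have e1 : q3fun t = (1/4)*t + (25/32) := by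
      simp only [q3fun]
      rw [if_neg (by linarith : ¬ (t ≤ (3/8))), if_neg (by linarith : ¬ (t ≤ (1/2))), if_neg (by linarith : ¬ (t ≤ (5/8))), if_pos (by linarith : t ≤ (3/4))]
    rw [e1]
    simp only [x0inv, q4fun]
    rw [if_neg (by linarith : ¬ ((1/4)*t + (25/32) ≤ (1/2))), if_neg (by linarith : ¬ ((1/4)*t + (25/32) ≤ (3/4))), if_neg (by linarith : ¬ (t ≤ (1/4))), if_neg (by linarith : ¬ (t ≤ (1/2))), if_neg (by linarith : ¬ (t ≤ (5/8))), if_pos (by linarith : t ≤ (3/4))]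
    try ring
  · have e1 : q3fun t = (1/8)*t + (7/8) := by
      simp only [q3fun]
      rw [if_neg (by linarith : ¬ (t ≤ (3/8))), if_neg (by linarith : ¬ (t ≤ (1/2))), if_neg (by linarith : ¬ (t ≤ (5/8))), if_neg (by linarith : ¬ (t ≤ (3/4)))]
    rw [e1]
    simp only [x0inv, q4fun]
    rw [if_neg (by linarith : ¬ ((1/8)*t + (7/8) ≤ (1/2))), if_neg (by linarith : ¬ ((1/8)*t + (7/8) ≤ (3/4))), if_neg (by linarith : ¬ (t ≤ (1/4))), if_neg (by linarith : ¬ (t ≤ (1/2))), if_neg (by linarith : ¬ (t ≤ (5/8))), if_neg (by linarith : ¬ (t ≤ (3/4)))]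
    try ring

def q5fun (t : ℝ) : ℝ := if t ≤ (1/4) then (1)*t + (0) else if t ≤ (3/8) then (2)*t + (-1/4) else if t ≤ (7/16) then (4)*t + (-1) else if t ≤ (1/2) then (2)*t + (-1/8) else if t ≤ (5/8) then (1/2)*t + (5/8) else if t ≤ (3/4) then (1/4)*t + (25/32) else (1/8)*t + (7/8)

lemma q5lem (t : ℝ) (h0 : 0 ≤ t) (h1 : t ≤ 1) : x1fun (q4fun t) = q5fun t := by
  rcases le_or_gt t (1/4) with hc0 | hc0
  · have e1 : q4fun t = (1)*t + (0) := by
      simp only [q4fun]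
      rw [if_pos (by linarith : t ≤ (1/4))]
    rw [e1]
    simp only [x1fun, q5fun]
    rw [if_pos (by linarith : (1)*t + (0) ≤ (1/2)), if_pos (by linarith : t ≤ (1/4))]
    try ring
  rcases le_or_gt t (3/8) with hc1 | hc1
  · have e1 : q4fun t = (2)*t + (-1/4) := by
      simp only [q4fun]
      rw [if_neg (by linarith : ¬ (t ≤ (1/4))), if_pos (by linarith : t ≤ (1/2))]
    rw [e1]
    simp only [x1fun, q5fun]
    rw [if_pos (by linarith : (2)*t + (-1/4) ≤ (1/2)), if_neg (by linarith : ¬ (t ≤ (1/4))), if_pos (by linarith : t ≤ (3/8))]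
    try ring
  rcases le_or_gt t (7/16) with hc2 | hc2
  · have e1 : q4fun t = (2)*t + (-1/4) := by
      simp only [q4fun]
      rw [if_neg (by linarith : ¬ (t ≤ (1/4))), if_pos (by linarith : t ≤ (1/2))]
    rw [e1]
    simp only [x1fun, q5fun]
    rw [if_neg (by linarith : ¬ ((2)*t + (-1/4) ≤ (1/2))), if_pos (by linarith : (2)*t + (-1/4) ≤ (5/8)), if_neg (by linarith : ¬ (t ≤ (1/4))), if_neg (by linarith : ¬ (t ≤ (3/8))), if_pos (by linarith : t ≤ (7/16))]
    try ring
  rcases le_or_gt t (1/2) with hc3 | hc3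
  · have e1 : q4fun t = (2)*t + (-1/4) := by
      simp only [q4fun]
      rw [if_neg (by linarith : ¬ (t ≤ (1/4))), if_pos (by linarith : t ≤ (1/2))]
    rw [e1]
    simp only [x1fun, q5fun]
    rw [if_neg (by linarith : ¬ ((2)*t + (-1/4) ≤ (1/2))), if_neg (by linarith : ¬ ((2)*t + (-1/4) ≤ (5/8))), if_pos (by linarith : (2)*t + (-1/4) ≤ (3/4)), if_neg (by linarith : ¬ (t ≤ (1/4))), if_neg (by linarith : ¬ (t ≤ (3/8))), if_neg (by linarith : ¬ (t ≤ (7/16))), if_pos (by linarith : t ≤ (1/2))]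
    try ring
  rcases le_or_gt t (5/8) with hc4 | hc4
  · have e1 : q4fun t = (1)*t + (1/4) := by
      simp only [q4fun]
      rw [if_neg (by linarith : ¬ (t ≤ (1/4))), if_neg (by linarith : ¬ (t ≤ (1/2))), if_pos (by linarith : t ≤ (5/8))]
    rw [e1]
    simp only [x1fun, q5fun]
    rw [if_neg (by linarith : ¬ ((1)*t + (1/4) ≤ (1/2))), if_neg (by linarith : ¬ ((1)*t + (1/4) ≤ (5/8))), if_neg (by linarith : ¬ ((1)*t + (1/4) ≤ (3/4))), if_neg (by linarith : ¬ (t ≤ (1/4))), if_neg (by linarith : ¬ (t ≤ (3/8))), if_neg (by linarith : ¬ (t ≤ (7/16))), if_neg (by linarith : ¬ (t ≤ (1/2))), if_pos (by linarith : t ≤ (5/8))]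
    try ring
  rcases le_or_gt t (3/4) with hc5 | hc5
  · have e1 : q4fun t = (1/2)*t + (9/16) := by
      simp only [q4fun]
      rw [if_neg (by linarith : ¬ (t ≤ (1/4))), if_neg (by linarith : ¬ (t ≤ (1/2))), if_neg (by linarith : ¬ (t ≤ (5/8))), if_pos (by linarith : t ≤ (3/4))]
    rw [e1]
    simp only [x1fun, q5fun]
    rw [if_neg (by linarith : ¬ ((1/2)*t + (9/16) ≤ (1/2))), if_neg (by linarith : ¬ ((1/2)*t + (9/16) ≤ (5/8))), if_neg (by linarith : ¬ ((1/2)*t + (9/16) ≤ (3/4))), if_neg (by linarith : ¬ (t ≤ (1/4))), if_neg (by linarith : ¬ (t ≤ (3/8))), if_neg (by linarith : ¬ (t ≤ (7/16))), if_neg (by linarith : ¬ (t ≤ (1/2))), if_neg (by linarith : ¬ (t ≤ (5/8))), if_pos (by linarith : t ≤ (3/4))]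
    try ring
  · have e1 : q4fun t = (1/4)*t + (3/4) := by
      simp only [q4fun]
      rw [if_neg (by linarith : ¬ (t ≤ (1/4))), if_neg (by linarith : ¬ (t ≤ (1/2))), if_neg (by linarith : ¬ (t ≤ (5/8))), if_neg (by linarith : ¬ (t ≤ (3/4)))]
    rw [e1]
    simp only [x1fun, q5fun]
    rw [if_neg (by linarith : ¬ ((1/4)*t + (3/4) ≤ (1/2))), if_neg (by linarith : ¬ ((1/4)*t + (3/4) ≤ (5/8))), if_neg (by linarith : ¬ ((1/4)*t + (3/4) ≤ (3/4))), if_neg (by linarith : ¬ (t ≤ (1/4))), if_neg (by linarith : ¬ (t ≤ (3/8))), if_neg (by linarith : ¬ (t ≤ (7/16))), if_neg (by linarith : ¬ (t ≤ (1/2))), if_neg (by linarith : ¬ (t ≤ (5/8))), if_neg (by linarith : ¬ (t ≤ (3/4)))]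
    try ring

def q6fun (t : ℝ) : ℝ := if t ≤ (7/16) then (2)*t + (0) else if t ≤ (1/2) then (1)*t + (7/16) else if t ≤ (5/8) then (1/4)*t + (13/16) else if t ≤ (3/4) then (1/8)*t + (57/64) else (1/16)*t + (15/16)

lemma q6lem (t : ℝ) (h0 : 0 ≤ t) (h1 : t ≤ 1) : x0fun (q5fun t) = q6fun t := by
  rcases le_or_gt t (1/4) with hc0 | hc0
  · have e1 : q5fun t = (1)*t + (0) := by
      simp only [q5fun]
      rw [if_pos (by linarith : t ≤ (1/4))]
    rw [e1]
    simp only [x0fun, q6fun]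
    rw [if_pos (by linarith : (1)*t + (0) ≤ (1/4)), if_pos (by linarith : t ≤ (7/16))]
    try ring
  rcases le_or_gt t (3/8) with hc1 | hc1
  · have e1 : q5fun t = (2)*t + (-1/4) := by
      simp only [q5fun]
      rw [if_neg (by linarith : ¬ (t ≤ (1/4))), if_pos (by linarith : t ≤ (3/8))]
    rw [e1]
    simp only [x0fun, q6fun]
    rw [if_neg (by linarith : ¬ ((2)*t + (-1/4) ≤ (1/4))), if_pos (by linarith : (2)*t + (-1/4) ≤ (1/2)), if_pos (by linarith : t ≤ (7/16))]
    try ring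
  rcases le_or_gt t (7/16) with hc2 | hc2
  · have e1 : q5fun t = (4)*t + (-1) := by
      simp only [q5fun]
      rw [if_neg (by linarith : ¬ (t ≤ (1/4))), if_neg (by linarith : ¬ (t ≤ (3/8))), if_pos (by linarith : t ≤ (7/16))]
    rw [e1]
    simp only [x0fun, q6fun]
    rw [if_neg (by linarith : ¬ ((4)*t + (-1) ≤ (1/4))), if_neg (by linarith : ¬ ((4)*t + (-1) ≤ (1/2))), if_pos (by linarith : t ≤ (7/16))]
    try ring
  rcases le_or_gt t (1/2) with hc3 | hc3
  · have e1 : q5fun t = (2)*t + (-1/8) := by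
      simp only [q5fun]
      rw [if_neg (by linarith : ¬ (t ≤ (1/4))), if_neg (by linarith : ¬ (t ≤ (3/8))), if_neg (by linarith : ¬ (t ≤ (7/16))), if_pos (by linarith : t ≤ (1/2))]
    rw [e1]
    simp only [x0fun, q6fun]
    rw [if_neg (by linarith : ¬ ((2)*t + (-1/8) ≤ (1/4))), if_neg (by linarith : ¬ ((2)*t + (-1/8) ≤ (1/2))), if_neg (by linarith : ¬ (t ≤ (7/16))), if_pos (by linarith : t ≤ (1/2))]
    try ring
  rcases le_or_gt t (5/8) with hc4 | hc4
  · have e1 : q5fun t = (1/2)*t + (5/8) := by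
      simp only [q5fun]
      rw [if_neg (by linarith : ¬ (t ≤ (1/4))), if_neg (by linarith : ¬ (t ≤ (3/8))), if_neg (by linarith : ¬ (t ≤ (7/16))), if_neg (by linarith : ¬ (t ≤ (1/2))), if_pos (by linarith : t ≤ (5/8))]
    rw [e1]
    simp only [x0fun, q6fun]
    rw [if_neg (by linarith : ¬ ((1/2)*t + (5/8) ≤ (1/4))), if_neg (by linarith : ¬ ((1/2)*t + (5/8) ≤ (1/2))), if_neg (by linarith : ¬ (t ≤ (7/16))), if_neg (by linarith : ¬ (t ≤ (1/2))), if_pos (by linarith : t ≤ (5/8))]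
    try ring
  rcases le_or_gt t (3/4) with hc5 | hc5
  · have e1 : q5fun t = (1/4)*t + (25/32) := by
      simp only [q5fun]
      rw [if_neg (by linarith : ¬ (t ≤ (1/4))), if_neg (by linarith : ¬ (t ≤ (3/8))), if_neg (by linarith : ¬ (t ≤ (7/16))), if_neg (by linarith : ¬ (t ≤ (1/2))), if_neg (by linarith : ¬ (t ≤ (5/8))), if_pos (by linarith : t ≤ (3/4))]
    rw [e1]
    simp only [x0fun, q6fun]
    rw [if_neg (by linarith : ¬ ((1/4)*t + (25/32) ≤ (1/4))), if_neg (by linarith : ¬ ((1/4)*t + (25/32) ≤ (1/2))), if_neg (by linarith : ¬ (t ≤ (7/16))), if_neg (by linarith : ¬ (t ≤ (1/2))), if_neg (by linarith : ¬ (t ≤ (5/8))), if_pos (by linarith : t ≤ (3/4))]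
    try ring
  · have e1 : q5fun t = (1/8)*t + (7/8) := by
      simp only [q5fun]
      rw [if_neg (by linarith : ¬ (t ≤ (1/4))), if_neg (by linarith : ¬ (t ≤ (3/8))), if_neg (by linarith : ¬ (t ≤ (7/16))), if_neg (by linarith : ¬ (t ≤ (1/2))), if_neg (by linarith : ¬ (t ≤ (5/8))), if_neg (by linarith : ¬ (t ≤ (3/4)))]
    rw [e1]
    simp only [x0fun, q6fun]
    rw [if_neg (by linarith : ¬ ((1/8)*t + (7/8) ≤ (1/4))), if_neg (by linarith : ¬ ((1/8)*t + (7/8) ≤ (1/2))), if_neg (by linarith : ¬ (t ≤ (7/16))), if_neg (by linarith : ¬ (t ≤ (1/2))), if_neg (by linarith : ¬ (t ≤ (5/8))), if_neg (by linarith : ¬ (t ≤ (3/4)))]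
    try ring

def q7fun (t : ℝ) : ℝ := if t ≤ (1/4) then (1)*t + (0) else if t ≤ (3/8) then (2)*t + (-1/4) else if t ≤ (7/16) then (4)*t + (-1) else if t ≤ (1/2) then (2)*t + (-1/8) else if t ≤ (5/8) then (1/2)*t + (5/8) else if t ≤ (3/4) then (1/4)*t + (25/32) else (1/8)*t + (7/8)

lemma q7lem (t : ℝ) (h0 : 0 ≤ t) (h1 : t ≤ 1) : x0inv (q6fun t) = q7fun t := by
  rcases le_or_gt t (1/4) with hc0 | hc0
  · have e1 : q6fun t = (2)*t + (0) := by
      simp only [q6fun]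
      rw [if_pos (by linarith : t ≤ (7/16))]
    rw [e1]
    simp only [x0inv, q7fun]
    rw [if_pos (by linarith : (2)*t + (0) ≤ (1/2)), if_pos (by linarith : t ≤ (1/4))]
    try ring
  rcases le_or_gt t (3/8) with hc1 | hc1
  · have e1 : q6fun t = (2)*t + (0) := by
      simp only [q6fun]
      rw [if_pos (by linarith : t ≤ (7/16))]
    rw [e1]
    simp only [x0inv, q7fun]
    rw [if_neg (by linarith : ¬ ((2)*t + (0) ≤ (1/2))), if_pos (by linarith : (2)*t + (0) ≤ (3/4)), if_neg (by linarith : ¬ (t ≤ (1/4))), if_pos (by linarith : t ≤ (3/8))]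
    try ring
  rcases le_or_gt t (7/16) with hc2 | hc2
  · have e1 : q6fun t = (2)*t + (0) := by
      simp only [q6fun]
      rw [if_pos (by linarith : t ≤ (7/16))]
    rw [e1]
    simp only [x0inv, q7fun]
    rw [if_neg (by linarith : ¬ ((2)*t + (0) ≤ (1/2))), if_neg (by linarith : ¬ ((2)*t + (0) ≤ (3/4))), if_neg (by linarith : ¬ (t ≤ (1/4))), if_neg (by linarith : ¬ (t ≤ (3/8))), if_pos (by linarith : t ≤ (7/16))]
    try ring
  rcases le_or_gt t (1/2) with hc3 | hc3
  · have e1 : q6fun t = (1)*t + (7/16) := by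
      simp only [q6fun]
      rw [if_neg (by linarith : ¬ (t ≤ (7/16))), if_pos (by linarith : t ≤ (1/2))]
    rw [e1]
    simp only [x0inv, q7fun]
    rw [if_neg (by linarith : ¬ ((1)*t + (7/16) ≤ (1/2))), if_neg (by linarith : ¬ ((1)*t + (7/16) ≤ (3/4))), if_neg (by linarith : ¬ (t ≤ (1/4))), if_neg (by linarith : ¬ (t ≤ (3/8))), if_neg (by linarith : ¬ (t ≤ (7/16))), if_pos (by linarith : t ≤ (1/2))]
    try ring
  rcases le_or_gt t (5/8) with hc4 | hc4
  · have e1 : q6fun t = (1/4)*t + (13/16) := by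
      simp only [q6fun]
      rw [if_neg (by linarith : ¬ (t ≤ (7/16))), if_neg (by linarith : ¬ (t ≤ (1/2))), if_pos (by linarith : t ≤ (5/8))]
    rw [e1]
    simp only [x0inv, q7fun]
    rw [if_neg (by linarith : ¬ ((1/4)*t + (13/16) ≤ (1/2))), if_neg (by linarith : ¬ ((1/4)*t + (13/16) ≤ (3/4))), if_neg (by linarith : ¬ (t ≤ (1/4))), if_neg (by linarith : ¬ (t ≤ (3/8))), if_neg (by linarith : ¬ (t ≤ (7/16))), if_neg (by linarith : ¬ (t ≤ (1/2))), if_pos (by linarith : t ≤ (5/8))]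
    try ring
  rcases le_or_gt t (3/4) with hc5 | hc5
  · have e1 : q6fun t = (1/8)*t + (57/64) := by
      simp only [q6fun]
      rw [if_neg (by linarith : ¬ (t ≤ (7/16))), if_neg (by linarith : ¬ (t ≤ (1/2))), if_neg (by linarith : ¬ (t ≤ (5/8))), if_pos (by linarith : t ≤ (3/4))]
    rw [e1]
    simp only [x0inv, q7fun]
    rw [if_neg (by linarith : ¬ ((1/8)*t + (57/64) ≤ (1/2))), if_neg (by linarith : ¬ ((1/8)*t + (57/64) ≤ (3/4))), if_neg (by linarith : ¬ (t ≤ (1/4))), if_neg (by linarith : ¬ (t ≤ (3/8))), if_neg (by linarith : ¬ (t ≤ (7/16))), if_neg (by linarith : ¬ (t ≤ (1/2))), if_neg (by linarith : ¬ (t ≤ (5/8))), if_pos (by linarith : t ≤ (3/4))]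
    try ring
  · have e1 : q6fun t = (1/16)*t + (15/16) := by
      simp only [q6fun]
      rw [if_neg (by linarith : ¬ (t ≤ (7/16))), if_neg (by linarith : ¬ (t ≤ (1/2))), if_neg (by linarith : ¬ (t ≤ (5/8))), if_neg (by linarith : ¬ (t ≤ (3/4)))]
    rw [e1]
    simp only [x0inv, q7fun]
    rw [if_neg (by linarith : ¬ ((1/16)*t + (15/16) ≤ (1/2))), if_neg (by linarith : ¬ ((1/16)*t + (15/16) ≤ (3/4))), if_neg (by linarith : ¬ (t ≤ (1/4))), if_neg (by linarith : ¬ (t ≤ (3/8))), if_neg (by linarith : ¬ (t ≤ (7/16))), if_neg (by linarith : ¬ (t ≤ (1/2))), if_neg (by linarith : ¬ (t ≤ (5/8))), if_neg (by linarith : ¬ (t ≤ (3/4)))]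
    try ring

def q8fun (t : ℝ) : ℝ := if t ≤ (1/4) then (1)*t + (0) else if t ≤ (1/2) then (2)*t + (-1/4) else if t ≤ (5/8) then (1)*t + (1/4) else if t ≤ (3/4) then (1/2)*t + (9/16) else (1/4)*t + (3/4)

lemma q8lem (t : ℝ) (h0 : 0 ≤ t) (h1 : t ≤ 1) : x1inv (q7fun t) = q8fun t := by
  rcases le_or_gt t (1/4) with hc0 | hc0
  · have e1 : q7fun t = (1)*t + (0) := by
      simp only [q7fun]
      rw [if_pos (by linarith : t ≤ (1/4))]
    rw [e1]
    simp only [x1inv, q8fun]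
    rw [if_pos (by linarith : (1)*t + (0) ≤ (1/2)), if_pos (by linarith : t ≤ (1/4))]
    try ring
  rcases le_or_gt t (3/8) with hc1 | hc1
  · have e1 : q7fun t = (2)*t + (-1/4) := by
      simp only [q7fun]
      rw [if_neg (by linarith : ¬ (t ≤ (1/4))), if_pos (by linarith : t ≤ (3/8))]
    rw [e1]
    simp only [x1inv, q8fun]
    rw [if_pos (by linarith : (2)*t + (-1/4) ≤ (1/2)), if_neg (by linarith : ¬ (t ≤ (1/4))), if_pos (by linarith : t ≤ (1/2))]
    try ring
  rcases le_or_gt t (7/16) with hc2 | hc2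
  · have e1 : q7fun t = (4)*t + (-1) := by
      simp only [q7fun]
      rw [if_neg (by linarith : ¬ (t ≤ (1/4))), if_neg (by linarith : ¬ (t ≤ (3/8))), if_pos (by linarith : t ≤ (7/16))]
    rw [e1]
    simp only [x1inv, q8fun]
    rw [if_neg (by linarith : ¬ ((4)*t + (-1) ≤ (1/2))), if_pos (by linarith : (4)*t + (-1) ≤ (3/4)), if_neg (by linarith : ¬ (t ≤ (1/4))), if_pos (by linarith : t ≤ (1/2))]
    try ring
  rcases le_or_gt t (1/2) with hc3 | hc3
  · have e1 : q7fun t = (2)*t + (-1/8) := by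
      simp only [q7fun]
      rw [if_neg (by linarith : ¬ (t ≤ (1/4))), if_neg (by linarith : ¬ (t ≤ (3/8))), if_neg (by linarith : ¬ (t ≤ (7/16))), if_pos (by linarith : t ≤ (1/2))]
    rw [e1]
    simp only [x1inv, q8fun]
    rw [if_neg (by linarith : ¬ ((2)*t + (-1/8) ≤ (1/2))), if_neg (by linarith : ¬ ((2)*t + (-1/8) ≤ (3/4))), if_pos (by linarith : (2)*t + (-1/8) ≤ (7/8)), if_neg (by linarith : ¬ (t ≤ (1/4))), if_pos (by linarith : t ≤ (1/2))]
    try ring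
  rcases le_or_gt t (5/8) with hc4 | hc4
  · have e1 : q7fun t = (1/2)*t + (5/8) := by
      simp only [q7fun]
      rw [if_neg (by linarith : ¬ (t ≤ (1/4))), if_neg (by linarith : ¬ (t ≤ (3/8))), if_neg (by linarith : ¬ (t ≤ (7/16))), if_neg (by linarith : ¬ (t ≤ (1/2))), if_pos (by linarith : t ≤ (5/8))]
    rw [e1]
    simp only [x1inv, q8fun]
    rw [if_neg (by linarith : ¬ ((1/2)*t + (5/8) ≤ (1/2))), if_neg (by linarith : ¬ ((1/2)*t + (5/8) ≤ (3/4))), if_neg (by linarith : ¬ ((1/2)*t + (5/8) ≤ (7/8))), if_neg (by linarith : ¬ (t ≤ (1/4))), if_neg (by linarith : ¬ (t ≤ (1/2))), if_pos (by linarith : t ≤ (5/8))]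
    try ring
  rcases le_or_gt t (3/4) with hc5 | hc5
  · have e1 : q7fun t = (1/4)*t + (25/32) := by
      simp only [q7fun]
      rw [if_neg (by linarith : ¬ (t ≤ (1/4))), if_neg (by linarith : ¬ (t ≤ (3/8))), if_neg (by linarith : ¬ (t ≤ (7/16))), if_neg (by linarith : ¬ (t ≤ (1/2))), if_neg (by linarith : ¬ (t ≤ (5/8))), if_pos (by linarith : t ≤ (3/4))]
    rw [e1]
    simp only [x1inv, q8fun]
    rw [if_neg (by linarith : ¬ ((1/4)*t + (25/32) ≤ (1/2))), if_neg (by linarith : ¬ ((1/4)*t + (25/32) ≤ (3/4))), if_neg (by linarith : ¬ ((1/4)*t + (25/32) ≤ (7/8))), if_neg (by linarith : ¬ (t ≤ (1/4))), if_neg (by linarith : ¬ (t ≤ (1/2))), if_neg (by linarith : ¬ (t ≤ (5/8))), if_pos (by linarith : t ≤ (3/4))]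
    try ring
  · have e1 : q7fun t = (1/8)*t + (7/8) := by
      simp only [q7fun]
      rw [if_neg (by linarith : ¬ (t ≤ (1/4))), if_neg (by linarith : ¬ (t ≤ (3/8))), if_neg (by linarith : ¬ (t ≤ (7/16))), if_neg (by linarith : ¬ (t ≤ (1/2))), if_neg (by linarith : ¬ (t ≤ (5/8))), if_neg (by linarith : ¬ (t ≤ (3/4)))]
    rw [e1]
    simp only [x1inv, q8fun]
    rw [if_neg (by linarith : ¬ ((1/8)*t + (7/8) ≤ (1/2))), if_neg (by linarith : ¬ ((1/8)*t + (7/8) ≤ (3/4))), if_neg (by linarith : ¬ ((1/8)*t + (7/8) ≤ (7/8))), if_neg (by linarith : ¬ (t ≤ (1/4))), if_neg (by linarith : ¬ (t ≤ (1/2))), if_neg (by linarith : ¬ (t ≤ (5/8))), if_neg (by linarith : ¬ (t ≤ (3/4)))]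
    try ring

def q9fun (t : ℝ) : ℝ := if t ≤ (1/4) then (1/2)*t + (0) else if t ≤ (3/8) then (1)*t + (-1/8) else if t ≤ (5/8) then (2)*t + (-1/2) else if t ≤ (3/4) then (1)*t + (1/8) else (1/2)*t + (1/2)

lemma q9lem (t : ℝ) (h0 : 0 ≤ t) (h1 : t ≤ 1) : x0inv (q8fun t) = q9fun t := by
  rcases le_or_gt t (1/4) with hc0 | hc0
  · have e1 : q8fun t = (1)*t + (0) := by
      simp only [q8fun]
      rw [if_pos (by linarith : t ≤ (1/4))]
    rw [e1]
    simp only [x0inv, q9fun]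
    rw [if_pos (by linarith : (1)*t + (0) ≤ (1/2)), if_pos (by linarith : t ≤ (1/4))]
    try ring
  rcases le_or_gt t (3/8) with hc1 | hc1
  · have e1 : q8fun t = (2)*t + (-1/4) := by
      simp only [q8fun]
      rw [if_neg (by linarith : ¬ (t ≤ (1/4))), if_pos (by linarith : t ≤ (1/2))]
    rw [e1]
    simp only [x0inv, q9fun]
    rw [if_pos (by linarith : (2)*t + (-1/4) ≤ (1/2)), if_neg (by linarith : ¬ (t ≤ (1/4))), if_pos (by linarith : t ≤ (3/8))]
    try ring
  rcases le_or_gt t (1/2) with hc2 | hc2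
  · have e1 : q8fun t = (2)*t + (-1/4) := by
      simp only [q8fun]
      rw [if_neg (by linarith : ¬ (t ≤ (1/4))), if_pos (by linarith : t ≤ (1/2))]
    rw [e1]
    simp only [x0inv, q9fun]
    rw [if_neg (by linarith : ¬ ((2)*t + (-1/4) ≤ (1/2))), if_pos (by linarith : (2)*t + (-1/4) ≤ (3/4)), if_neg (by linarith : ¬ (t ≤ (1/4))), if_neg (by linarith : ¬ (t ≤ (3/8))), if_pos (by linarith : t ≤ (5/8))]
    try ring
  rcases le_or_gt t (5/8) with hc3 | hc3
  · have e1 : q8fun t = (1)*t + (1/4) := by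
      simp only [q8fun]
      rw [if_neg (by linarith : ¬ (t ≤ (1/4))), if_neg (by linarith : ¬ (t ≤ (1/2))), if_pos (by linarith : t ≤ (5/8))]
    rw [e1]
    simp only [x0inv, q9fun]
    rw [if_neg (by linarith : ¬ ((1)*t + (1/4) ≤ (1/2))), if_neg (by linarith : ¬ ((1)*t + (1/4) ≤ (3/4))), if_neg (by linarith : ¬ (t ≤ (1/4))), if_neg (by linarith : ¬ (t ≤ (3/8))), if_pos (by linarith : t ≤ (5/8))]
    try ring
  rcases le_or_gt t (3/4) with hc4 | hc4
  · have e1 : q8fun t = (1/2)*t + (9/16) := by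
      simp only [q8fun]
      rw [if_neg (by linarith : ¬ (t ≤ (1/4))), if_neg (by linarith : ¬ (t ≤ (1/2))), if_neg (by linarith : ¬ (t ≤ (5/8))), if_pos (by linarith : t ≤ (3/4))]
    rw [e1]
    simp only [x0inv, q9fun]
    rw [if_neg (by linarith : ¬ ((1/2)*t + (9/16) ≤ (1/2))), if_neg (by linarith : ¬ ((1/2)*t + (9/16) ≤ (3/4))), if_neg (by linarith : ¬ (t ≤ (1/4))), if_neg (by linarith : ¬ (t ≤ (3/8))), if_neg (by linarith : ¬ (t ≤ (5/8))), if_pos (by linarith : t ≤ (3/4))]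
    try ring
  · have e1 : q8fun t = (1/4)*t + (3/4) := by
      simp only [q8fun]
      rw [if_neg (by linarith : ¬ (t ≤ (1/4))), if_neg (by linarith : ¬ (t ≤ (1/2))), if_neg (by linarith : ¬ (t ≤ (5/8))), if_neg (by linarith : ¬ (t ≤ (3/4)))]
    rw [e1]
    simp only [x0inv, q9fun]
    rw [if_neg (by linarith : ¬ ((1/4)*t + (3/4) ≤ (1/2))), if_neg (by linarith : ¬ ((1/4)*t + (3/4) ≤ (3/4))), if_neg (by linarith : ¬ (t ≤ (1/4))), if_neg (by linarith : ¬ (t ≤ (3/8))), if_neg (by linarith : ¬ (t ≤ (5/8))), if_neg (by linarith : ¬ (t ≤ (3/4)))]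
    try ring

def q10fun (t : ℝ) : ℝ := if t ≤ (1/4) then (1/2)*t + (0) else if t ≤ (3/8) then (1)*t + (-1/8) else if t ≤ (1/2) then (2)*t + (-1/2) else (1)*t + (0)

lemma q10lem (t : ℝ) (h0 : 0 ≤ t) (h1 : t ≤ 1) : x1inv (q9fun t) = q10fun t := by
  rcases le_or_gt t (1/4) with hc0 | hc0
  · have e1 : q9fun t = (1/2)*t + (0) := by
      simp only [q9fun]
      rw [if_pos (by linarith : t ≤ (1/4))]
    rw [e1]
    simp only [x1inv, q10fun]
    rw [if_pos (by linarith : (1/2)*t + (0) ≤ (1/2)), if_pos (by linarith : t ≤ (1/4))]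
    try ring
  rcases le_or_gt t (3/8) with hc1 | hc1
  · have e1 : q9fun t = (1)*t + (-1/8) := by
      simp only [q9fun]
      rw [if_neg (by linarith : ¬ (t ≤ (1/4))), if_pos (by linarith : t ≤ (3/8))]
    rw [e1]
    simp only [x1inv, q10fun]
    rw [if_pos (by linarith : (1)*t + (-1/8) ≤ (1/2)), if_neg (by linarith : ¬ (t ≤ (1/4))), if_pos (by linarith : t ≤ (3/8))]
    try ring
  rcases le_or_gt t (1/2) with hc2 | hc2
  · have e1 : q9fun t = (2)*t + (-1/2) := by
      simp only [q9fun]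
      rw [if_neg (by linarith : ¬ (t ≤ (1/4))), if_neg (by linarith : ¬ (t ≤ (3/8))), if_pos (by linarith : t ≤ (5/8))]
    rw [e1]
    simp only [x1inv, q10fun]
    rw [if_pos (by linarith : (2)*t + (-1/2) ≤ (1/2)), if_neg (by linarith : ¬ (t ≤ (1/4))), if_neg (by linarith : ¬ (t ≤ (3/8))), if_pos (by linarith : t ≤ (1/2))]
    try ring
  rcases le_or_gt t (5/8) with hc3 | hc3
  · have e1 : q9fun t = (2)*t + (-1/2) := by
      simp only [q9fun]
      rw [if_neg (by linarith : ¬ (t ≤ (1/4))), if_neg (by linarith : ¬ (t ≤ (3/8))), if_pos (by linarith : t ≤ (5/8))]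
    rw [e1]
    simp only [x1inv, q10fun]
    rw [if_neg (by linarith : ¬ ((2)*t + (-1/2) ≤ (1/2))), if_pos (by linarith : (2)*t + (-1/2) ≤ (3/4)), if_neg (by linarith : ¬ (t ≤ (1/4))), if_neg (by linarith : ¬ (t ≤ (3/8))), if_neg (by linarith : ¬ (t ≤ (1/2)))]
    try ring
  rcases le_or_gt t (3/4) with hc4 | hc4
  · have e1 : q9fun t = (1)*t + (1/8) := by
      simp only [q9fun]
      rw [if_neg (by linarith : ¬ (t ≤ (1/4))), if_neg (by linarith : ¬ (t ≤ (3/8))), if_neg (by linarith : ¬ (t ≤ (5/8))), if_pos (by linarith : t ≤ (3/4))]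
    rw [e1]
    simp only [x1inv, q10fun]
    rw [if_neg (by linarith : ¬ ((1)*t + (1/8) ≤ (1/2))), if_neg (by linarith : ¬ ((1)*t + (1/8) ≤ (3/4))), if_pos (by linarith : (1)*t + (1/8) ≤ (7/8)), if_neg (by linarith : ¬ (t ≤ (1/4))), if_neg (by linarith : ¬ (t ≤ (3/8))), if_neg (by linarith : ¬ (t ≤ (1/2)))]
    try ring
  · have e1 : q9fun t = (1/2)*t + (1/2) := by
      simp only [q9fun]
      rw [if_neg (by linarith : ¬ (t ≤ (1/4))), if_neg (by linarith : ¬ (t ≤ (3/8))), if_neg (by linarith : ¬ (t ≤ (5/8))), if_neg (by linarith : ¬ (t ≤ (3/4)))]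
    rw [e1]
    simp only [x1inv, q10fun]
    rw [if_neg (by linarith : ¬ ((1/2)*t + (1/2) ≤ (1/2))), if_neg (by linarith : ¬ ((1/2)*t + (1/2) ≤ (3/4))), if_neg (by linarith : ¬ ((1/2)*t + (1/2) ≤ (7/8))), if_neg (by linarith : ¬ (t ≤ (1/4))), if_neg (by linarith : ¬ (t ≤ (3/8))), if_neg (by linarith : ¬ (t ≤ (1/2)))]
    try ring

def q11fun (t : ℝ) : ℝ := if t ≤ (1/4) then (1)*t + (0) else if t ≤ (1/2) then (2)*t + (-1/4) else (1/2)*t + (1/2)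

lemma q11lem (t : ℝ) (h0 : 0 ≤ t) (h1 : t ≤ 1) : x0fun (q10fun t) = q11fun t := by
  rcases le_or_gt t (1/4) with hc0 | hc0
  · have e1 : q10fun t = (1/2)*t + (0) := by
      simp only [q10fun]
      rw [if_pos (by linarith : t ≤ (1/4))]
    rw [e1]
    simp only [x0fun, q11fun]
    rw [if_pos (by linarith : (1/2)*t + (0) ≤ (1/4)), if_pos (by linarith : t ≤ (1/4))]
    try ring
  rcases le_or_gt t (3/8) with hc1 | hc1
  · have e1 : q10fun t = (1)*t + (-1/8) := by
      simp only [q10fun]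
      rw [if_neg (by linarith : ¬ (t ≤ (1/4))), if_pos (by linarith : t ≤ (3/8))]
    rw [e1]
    simp only [x0fun, q11fun]
    rw [if_pos (by linarith : (1)*t + (-1/8) ≤ (1/4)), if_neg (by linarith : ¬ (t ≤ (1/4))), if_pos (by linarith : t ≤ (1/2))]
    try ring
  rcases le_or_gt t (1/2) with hc2 | hc2
  · have e1 : q10fun t = (2)*t + (-1/2) := by
      simp only [q10fun]
      rw [if_neg (by linarith : ¬ (t ≤ (1/4))), if_neg (by linarith : ¬ (t ≤ (3/8))), if_pos (by linarith : t ≤ (1/2))]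
    rw [e1]
    simp only [x0fun, q11fun]
    rw [if_neg (by linarith : ¬ ((2)*t + (-1/2) ≤ (1/4))), if_pos (by linarith : (2)*t + (-1/2) ≤ (1/2)), if_neg (by linarith : ¬ (t ≤ (1/4))), if_pos (by linarith : t ≤ (1/2))]
    try ring
  · have e1 : q10fun t = (1)*t + (0) := by
      simp only [q10fun]
      rw [if_neg (by linarith : ¬ (t ≤ (1/4))), if_neg (by linarith : ¬ (t ≤ (3/8))), if_neg (by linarith : ¬ (t ≤ (1/2)))]
    rw [e1]
    simp only [x0fun, q11fun]
    rw [if_neg (by linarith : ¬ ((1)*t + (0) ≤ (1/4))), if_neg (by linarith : ¬ ((1)*t + (0) ≤ (1/2))), if_neg (by linarith : ¬ (t ≤ (1/4))), if_neg (by linarith : ¬ (t ≤ (1/2)))]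
    try ring

def q12fun (t : ℝ) : ℝ := if t ≤ (1/4) then (1)*t + (0) else if t ≤ (3/8) then (2)*t + (-1/4) else if t ≤ (1/2) then (1)*t + (1/8) else if t ≤ (3/4) then (1/2)*t + (3/8) else (1)*t + (0)

lemma q12lem (t : ℝ) (h0 : 0 ≤ t) (h1 : t ≤ 1) : x1inv (q11fun t) = q12fun t := by
  rcases le_or_gt t (1/4) with hc0 | hc0
  · have e1 : q11fun t = (1)*t + (0) := by
      simp only [q11fun]
      rw [if_pos (by linarith : t ≤ (1/4))]
    rw [e1]
    simp only [x1inv, q12fun]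
    rw [if_pos (by linarith : (1)*t + (0) ≤ (1/2)), if_pos (by linarith : t ≤ (1/4))]
    try ring
  rcases le_or_gt t (3/8) with hc1 | hc1
  · have e1 : q11fun t = (2)*t + (-1/4) := by
      simp only [q11fun]
      rw [if_neg (by linarith : ¬ (t ≤ (1/4))), if_pos (by linarith : t ≤ (1/2))]
    rw [e1]
    simp only [x1inv, q12fun]
    rw [if_pos (by linarith : (2)*t + (-1/4) ≤ (1/2)), if_neg (by linarith : ¬ (t ≤ (1/4))), if_pos (by linarith : t ≤ (3/8))]
    try ring
  rcases le_or_gt t (1/2) with hc2 | hc2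
  · have e1 : q11fun t = (2)*t + (-1/4) := by
      simp only [q11fun]
      rw [if_neg (by linarith : ¬ (t ≤ (1/4))), if_pos (by linarith : t ≤ (1/2))]
    rw [e1]
    simp only [x1inv, q12fun]
    rw [if_neg (by linarith : ¬ ((2)*t + (-1/4) ≤ (1/2))), if_pos (by linarith : (2)*t + (-1/4) ≤ (3/4)), if_neg (by linarith : ¬ (t ≤ (1/4))), if_neg (by linarith : ¬ (t ≤ (3/8))), if_pos (by linarith : t ≤ (1/2))]
    try ring
  rcases le_or_gt t (3/4) with hc3 | hc3
  · have e1 : q11fun t = (1/2)*t + (1/2) := by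
      simp only [q11fun]
      rw [if_neg (by linarith : ¬ (t ≤ (1/4))), if_neg (by linarith : ¬ (t ≤ (1/2)))]
    rw [e1]
    simp only [x1inv, q12fun]
    rw [if_neg (by linarith : ¬ ((1/2)*t + (1/2) ≤ (1/2))), if_neg (by linarith : ¬ ((1/2)*t + (1/2) ≤ (3/4))), if_pos (by linarith : (1/2)*t + (1/2) ≤ (7/8)), if_neg (by linarith : ¬ (t ≤ (1/4))), if_neg (by linarith : ¬ (t ≤ (3/8))), if_neg (by linarith : ¬ (t ≤ (1/2))), if_pos (by linarith : t ≤ (3/4))]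
    try ring
  · have e1 : q11fun t = (1/2)*t + (1/2) := by
      simp only [q11fun]
      rw [if_neg (by linarith : ¬ (t ≤ (1/4))), if_neg (by linarith : ¬ (t ≤ (1/2)))]
    rw [e1]
    simp only [x1inv, q12fun]
    rw [if_neg (by linarith : ¬ ((1/2)*t + (1/2) ≤ (1/2))), if_neg (by linarith : ¬ ((1/2)*t + (1/2) ≤ (3/4))), if_neg (by linarith : ¬ ((1/2)*t + (1/2) ≤ (7/8))), if_neg (by linarith : ¬ (t ≤ (1/4))), if_neg (by linarith : ¬ (t ≤ (3/8))), if_neg (by linarith : ¬ (t ≤ (1/2))), if_neg (by linarith : ¬ (t ≤ (3/4)))]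
    try ring

def q13fun (t : ℝ) : ℝ := if t ≤ (1/4) then (1)*t + (0) else if t ≤ (1/2) then (2)*t + (-1/4) else (1/2)*t + (1/2)

lemma q13lem (t : ℝ) (h0 : 0 ≤ t) (h1 : t ≤ 1) : x1fun (q12fun t) = q13fun t := by
  rcases le_or_gt t (1/4) with hc0 | hc0
  · have e1 : q12fun t = (1)*t + (0) := by
      simp only [q12fun]
      rw [if_pos (by linarith : t ≤ (1/4))]
    rw [e1]
    simp only [x1fun, q13fun]
    rw [if_pos (by linarith : (1)*t + (0) ≤ (1/2)), if_pos (by linarith : t ≤ (1/4))]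
    try ring
  rcases le_or_gt t (3/8) with hc1 | hc1
  · have e1 : q12fun t = (2)*t + (-1/4) := by
      simp only [q12fun]
      rw [if_neg (by linarith : ¬ (t ≤ (1/4))), if_pos (by linarith : t ≤ (3/8))]
    rw [e1]
    simp only [x1fun, q13fun]
    rw [if_pos (by linarith : (2)*t + (-1/4) ≤ (1/2)), if_neg (by linarith : ¬ (t ≤ (1/4))), if_pos (by linarith : t ≤ (1/2))]
    try ring
  rcases le_or_gt t (1/2) with hc2 | hc2
  · have e1 : q12fun t = (1)*t + (1/8) := by
      simp only [q12fun]
      rw [if_neg (by linarith : ¬ (t ≤ (1/4))), if_neg (by linarith : ¬ (t ≤ (3/8))), if_pos (by linarith : t ≤ (1/2))]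
    rw [e1]
    simp only [x1fun, q13fun]
    rw [if_neg (by linarith : ¬ ((1)*t + (1/8) ≤ (1/2))), if_pos (by linarith : (1)*t + (1/8) ≤ (5/8)), if_neg (by linarith : ¬ (t ≤ (1/4))), if_pos (by linarith : t ≤ (1/2))]
    try ring
  rcases le_or_gt t (3/4) with hc3 | hc3
  · have e1 : q12fun t = (1/2)*t + (3/8) := by
      simp only [q12fun]
      rw [if_neg (by linarith : ¬ (t ≤ (1/4))), if_neg (by linarith : ¬ (t ≤ (3/8))), if_neg (by linarith : ¬ (t ≤ (1/2))), if_pos (by linarith : t ≤ (3/4))]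
    rw [e1]
    simp only [x1fun, q13fun]
    rw [if_neg (by linarith : ¬ ((1/2)*t + (3/8) ≤ (1/2))), if_neg (by linarith : ¬ ((1/2)*t + (3/8) ≤ (5/8))), if_pos (by linarith : (1/2)*t + (3/8) ≤ (3/4)), if_neg (by linarith : ¬ (t ≤ (1/4))), if_neg (by linarith : ¬ (t ≤ (1/2)))]
    try ring
  · have e1 : q12fun t = (1)*t + (0) := by
      simp only [q12fun]
      rw [if_neg (by linarith : ¬ (t ≤ (1/4))), if_neg (by linarith : ¬ (t ≤ (3/8))), if_neg (by linarith : ¬ (t ≤ (1/2))), if_neg (by linarith : ¬ (t ≤ (3/4)))]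
    rw [e1]
    simp only [x1fun, q13fun]
    rw [if_neg (by linarith : ¬ ((1)*t + (0) ≤ (1/2))), if_neg (by linarith : ¬ ((1)*t + (0) ≤ (5/8))), if_neg (by linarith : ¬ ((1)*t + (0) ≤ (3/4))), if_neg (by linarith : ¬ (t ≤ (1/4))), if_neg (by linarith : ¬ (t ≤ (1/2)))]
    try ring

def q14fun (t : ℝ) : ℝ := if t ≤ (3/8) then (2)*t + (0) else if t ≤ (1/2) then (1)*t + (3/8) else (1/4)*t + (3/4)

lemma q14lem (t : ℝ) (h0 : 0 ≤ t) (h1 : t ≤ 1) : x0fun (q13fun t) = q14fun t := by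
  rcases le_or_gt t (1/4) with hc0 | hc0
  · have e1 : q13fun t = (1)*t + (0) := by
      simp only [q13fun]
      rw [if_pos (by linarith : t ≤ (1/4))]
    rw [e1]
    simp only [x0fun, q14fun]
    rw [if_pos (by linarith : (1)*t + (0) ≤ (1/4)), if_pos (by linarith : t ≤ (3/8))]
    try ring
  rcases le_or_gt t (3/8) with hc1 | hc1
  · have e1 : q13fun t = (2)*t + (-1/4) := by
      simp only [q13fun]
      rw [if_neg (by linarith : ¬ (t ≤ (1/4))), if_pos (by linarith : t ≤ (1/2))]
    rw [e1]
    simp only [x0fun, q14fun]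
    rw [if_neg (by linarith : ¬ ((2)*t + (-1/4) ≤ (1/4))), if_pos (by linarith : (2)*t + (-1/4) ≤ (1/2)), if_pos (by linarith : t ≤ (3/8))]
    try ring
  rcases le_or_gt t (1/2) with hc2 | hc2
  · have e1 : q13fun t = (2)*t + (-1/4) := by
      simp only [q13fun]
      rw [if_neg (by linarith : ¬ (t ≤ (1/4))), if_pos (by linarith : t ≤ (1/2))]
    rw [e1]
    simp only [x0fun, q14fun]
    rw [if_neg (by linarith : ¬ ((2)*t + (-1/4) ≤ (1/4))), if_neg (by linarith : ¬ ((2)*t + (-1/4) ≤ (1/2))), if_neg (by linarith : ¬ (t ≤ (3/8))), if_pos (by linarith : t ≤ (1/2))]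
    try ring
  · have e1 : q13fun t = (1/2)*t + (1/2) := by
      simp only [q13fun]
      rw [if_neg (by linarith : ¬ (t ≤ (1/4))), if_neg (by linarith : ¬ (t ≤ (1/2)))]
    rw [e1]
    simp only [x0fun, q14fun]
    rw [if_neg (by linarith : ¬ ((1/2)*t + (1/2) ≤ (1/4))), if_neg (by linarith : ¬ ((1/2)*t + (1/2) ≤ (1/2))), if_neg (by linarith : ¬ (t ≤ (3/8))), if_neg (by linarith : ¬ (t ≤ (1/2)))]
    try ring

lemma qfinal (t : ℝ) (h0 : 0 ≤ t) (h1 : t ≤ 1) : q14fun t = x1fun (x0fun t) := by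
  simp only [x0fun, x1fun, q14fun]
  split_ifs <;> linarith


-- ===================== auxiliary development =====================

lemma x_zero : x 0 = x₀ := by simp [x]
lemma x_one : x 1 = x₁ := by simp [x]
lemma x_two : x 2 = x₀ * x₁ * x₀⁻¹ := by simp [x]

lemma coe_x0_apply (t : I) : ((x₀ t : I) : ℝ) = x0fun t := rfl
lemma coe_x1_apply (t : I) : ((x₁ t : I) : ℝ) = x1fun t := rfl
lemma coe_x0_inv_apply (t : I) : ((x₀⁻¹ t : I) : ℝ) = x0inv t := rfl
lemma coe_x1_inv_apply (t : I) : ((x₁⁻¹ t : I) : ℝ) = x1inv t := rfl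

/-- The key piecewise-linear identity `x₁x₀ = u v⁻¹ u⁻¹ v u` with `u = x₀x₁`,
`v = x₀x₁x₀⁻¹x₁`. -/
lemma key_identity :
    x₁ * x₀ = (x₀*x₁) * (x₀*x₁*x₀⁻¹*x₁)⁻¹ * (x₀*x₁)⁻¹ * (x₀*x₁*x₀⁻¹*x₁) * (x₀*x₁) := by
  have hexp : (x₀*x₁) * (x₀*x₁*x₀⁻¹*x₁)⁻¹ * (x₀*x₁)⁻¹ * (x₀*x₁*x₀⁻¹*x₁) * (x₀*x₁)
      = x₀*(x₁*(x₁⁻¹*(x₀*(x₁⁻¹*(x₀⁻¹*(x₁⁻¹*(x₀⁻¹*(x₀*(x₁*(x₀⁻¹*(x₁*(x₀*x₁)))))))))))) := by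
    group
  rw [hexp]
  apply Equiv.ext
  intro t
  obtain ⟨h0, h1⟩ := Set.mem_Icc.mp t.2
  apply Subtype.ext
  simp only [Equiv.Perm.mul_apply, coe_x0_apply, coe_x1_apply, coe_x0_inv_apply,
    coe_x1_inv_apply]
  rw [q1lem _ h0 h1, q2lem _ h0 h1, q3lem _ h0 h1, q4lem _ h0 h1, q5lem _ h0 h1,
    q6lem _ h0 h1, q7lem _ h0 h1, q8lem _ h0 h1, q9lem _ h0 h1, q10lem _ h0 h1,
    q11lem _ h0 h1, q12lem _ h0 h1, q13lem _ h0 h1, q14lem _ h0 h1, qfinal _ h0 h1]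

lemma u_mem : x₀ * x₁ ∈ G := by
  have h : x 2 * x 0 = x₀ * x₁ := by rw [x_two, x_zero]; group
  rw [← h]; exact y0_mem_G

lemma v_mem : x₀ * x₁ * x₀⁻¹ * x₁ ∈ G := by
  have h : x 2 * x 1 = x₀ * x₁ * x₀⁻¹ * x₁ := by rw [x_two, x_one]
  rw [← h]; exact y1_mem_G

lemma ba_mem : x₁ * x₀ ∈ G := by
  rw [key_identity]
  exact mul_mem (mul_mem (mul_mem (mul_mem u_mem (inv_mem v_mem)) (inv_mem u_mem)) v_mem) u_mem

lemma asq_mem : x₀ * x₀ ∈ G := by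
  have h : x₀ * x₀ = (x₀*x₁) * (x₀*x₁*x₀⁻¹*x₁)⁻¹ * (x₀*x₁) := by group
  rw [h]; exact mul_mem (mul_mem u_mem (inv_mem v_mem)) u_mem

lemma ainvb_mem : x₀⁻¹ * x₁ ∈ G := by
  have h : x₀⁻¹ * x₁ = ((x₀*x₁*x₀⁻¹*x₁)⁻¹ * (x₀*x₁))⁻¹ := by group
  rw [h]; exact inv_mem (mul_mem (inv_mem v_mem) u_mem)

lemma bainv_mem : x₁ * x₀⁻¹ ∈ G := by
  have h : x₁ * x₀⁻¹ = (x₁ * x₀) * (x₀ * x₀)⁻¹ := by group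
  rw [h]; exact mul_mem ba_mem (inv_mem asq_mem)

lemma conjG : ∀ g ∈ G, x₀⁻¹ * g * x₀ ∈ G := by
  intro g hg
  refine Subgroup.closure_induction ?_ ?_ ?_ ?_ hg
  · intro w hw
    rcases hw with h | h
    · subst h
      have e : x₀⁻¹ * (x 2 * x 0) * x₀ = x₁ * x₀ := by rw [x_two, x_zero]; group
      rw [e]; exact ba_mem
    · rw [Set.mem_singleton_iff] at h
      subst h
      have e : x₀⁻¹ * (x 2 * x 1) * x₀ = (x₁ * x₀⁻¹) * (x₁ * x₀) := by
        rw [x_two, x_one]; group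
      rw [e]; exact mul_mem bainv_mem ba_mem
  · simpa using one_mem G
  · intro w v _ _ hw hv
    have e : x₀⁻¹ * (w * v) * x₀ = (x₀⁻¹ * w * x₀) * (x₀⁻¹ * v * x₀) := by group
    rw [e]; exact mul_mem hw hv
  · intro w _ hw
    have e : x₀⁻¹ * w⁻¹ * x₀ = (x₀⁻¹ * w * x₀)⁻¹ := by group
    rw [e]; exact inv_mem hw

/-- The subgroup `G ∪ x₀ G`. -/
def GT : Subgroup (Equiv.Perm I) where
  carrier := {w | w ∈ G ∨ x₀⁻¹ * w ∈ G}
  one_mem' := Or.inl (one_mem G)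
  mul_mem' := by
    rintro a b (ha | ha) (hb | hb)
    · exact Or.inl (mul_mem ha hb)
    · refine Or.inr ?_
      have e : x₀⁻¹ * (a * b) = (x₀⁻¹ * a * x₀) * (x₀⁻¹ * b) := by group
      rw [e]; exact mul_mem (conjG a ha) hb
    · refine Or.inr ?_
      have e : x₀⁻¹ * (a * b) = (x₀⁻¹ * a) * b := by group
      rw [e]; exact mul_mem ha hb
    · refine Or.inl ?_
      have e : a * b = (x₀ * x₀) * ((x₀⁻¹ * (x₀⁻¹ * a) * x₀) * (x₀⁻¹ * b)) := by group
      rw [e]; exact mul_mem asq_mem (mul_mem (conjG _ ha) hb)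
  inv_mem' := by
    rintro a (ha | ha)
    · exact Or.inl (inv_mem ha)
    · refine Or.inr ?_
      have e : x₀⁻¹ * a⁻¹ = (x₀⁻¹ * (x₀⁻¹ * a)⁻¹ * x₀) * (x₀ * x₀)⁻¹ := by group
      rw [e]; exact mul_mem (conjG _ (inv_mem ha)) (inv_mem asq_mem)

lemma decomp : ∀ w ∈ F, w ∈ G ∨ x₀⁻¹ * w ∈ G := by
  intro w hw
  have hle : F ≤ GT := by
    rw [F, Subgroup.closure_le]
    rintro a (h | h)
    · subst h
      refine Or.inr ?_
      rw [x_zero, inv_mul_cancel]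
      exact one_mem G
    · rw [Set.mem_singleton_iff] at h
      subst h
      refine Or.inr ?_
      rw [x_one]
      exact ainvb_mem
  exact hle hw

/-- `w` is linear with slope `2^k` near `1`. -/
def HasSl (w : Equiv.Perm I) (k : ℤ) : Prop :=
  ∃ δ : ℝ, 0 < δ ∧ ∀ t : I, 1 - δ ≤ (t : ℝ) → ((w t : I) : ℝ) = 2^k * ((t:ℝ) - 1) + 1

lemma hasSl_unique {w : Equiv.Perm I} {k k' : ℤ} (h : HasSl w k) (h' : HasSl w k') :
    k = k' := by
  obtain ⟨δ, hδ, hf⟩ := h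
  obtain ⟨δ', hδ', hf'⟩ := h'
  set ε : ℝ := min (min δ δ') 1 with hε
  have hεpos : 0 < ε := by positivity
  have hε1 : ε ≤ 1 := min_le_right _ _
  have hεδ : ε ≤ δ := le_trans (min_le_left _ _) (min_le_left _ _)
  have hεδ' : ε ≤ δ' := le_trans (min_le_left _ _) (min_le_right _ _)
  have ht0 : (0:ℝ) ≤ 1 - ε/2 := by linarith
  have ht1 : (1:ℝ) - ε/2 ≤ 1 := by linarith
  set t : I := ⟨1 - ε/2, Set.mem_Icc.mpr ⟨ht0, ht1⟩⟩ with htdef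
  have htval : (t : ℝ) = 1 - ε/2 := rfl
  have e1 := hf t (by rw [htval]; linarith)
  have e2 := hf' t (by rw [htval]; linarith)
  have h4 : (2:ℝ)^k * ((t:ℝ) - 1) = 2^k' * ((t:ℝ) - 1) := by linarith [e1.symm.trans e2]
  have hne : (t:ℝ) - 1 ≠ 0 := by
    rw [htval]
    intro hc
    have : ε = 0 := by linarith
    exact absurd this (ne_of_gt hεpos)
  have h3 : (2:ℝ)^k = 2^k' := mul_right_cancel₀ hne h4
  exact zpow_right_injective₀ (by norm_num) (by norm_num) h3

lemma hasSl_mul {w v : Equiv.Perm I} {k l : ℤ} (hw : HasSl w k) (hv : HasSl v l) :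
    HasSl (w * v) (k + l) := by
  obtain ⟨δw, hδw, hfw⟩ := hw
  obtain ⟨δv, hδv, hfv⟩ := hv
  have h2l : (0:ℝ) < 2^(l:ℤ) := by positivity
  refine ⟨min δv (δw * 2^(-l)), by positivity, ?_⟩
  intro t ht
  have hmin1 : min δv (δw * 2^(-l:ℤ)) ≤ δv := min_le_left _ _
  have hmin2 : min δv (δw * 2^(-l:ℤ)) ≤ δw * 2^(-l:ℤ) := min_le_right _ _
  have hδ1 : 1 - δv ≤ (t:ℝ) := by linarith
  have hvt := hfv t hδ1
  have h3 : (2:ℝ)^(l:ℤ) * (2:ℝ)^(-l:ℤ) = 1 := by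
    rw [← zpow_add₀ (by norm_num : (2:ℝ) ≠ 0)]; simp
  have hA : 1 - (t:ℝ) ≤ δw * 2^(-l:ℤ) := by linarith
  have hB : (2:ℝ)^(l:ℤ) * (1 - (t:ℝ)) ≤ (2:ℝ)^(l:ℤ) * (δw * 2^(-l:ℤ)) :=
    mul_le_mul_of_nonneg_left hA h2l.le
  have hC : (2:ℝ)^(l:ℤ) * (δw * 2^(-l:ℤ)) = δw := by
    rw [mul_comm δw, ← mul_assoc, h3, one_mul]
  have hB' : (2:ℝ)^(l:ℤ) * (1 - (t:ℝ)) ≤ δw := hC ▸ hB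
  have hD : (2:ℝ)^(l:ℤ)*((t:ℝ)-1) = -((2:ℝ)^(l:ℤ)*(1-(t:ℝ))) := by ring
  have hvt' : 1 - δw ≤ ((v t : I) : ℝ) := by
    rw [hvt]; linarith [hB', hD]
  have hw2 := hfw (v t) hvt'
  show ((w (v t) : I) : ℝ) = 2^(k+l) * ((t:ℝ)-1) + 1
  rw [hw2, hvt, zpow_add₀ (by norm_num : (2:ℝ) ≠ 0)]
  ring

lemma hasSl_inv {w : Equiv.Perm I} {k : ℤ} (hw : HasSl w k) : HasSl w⁻¹ (-k) := by
  obtain ⟨δ, hδ, hf⟩ := hw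
  refine ⟨2^k * min δ 1, by positivity, ?_⟩
  intro s hs
  have h2k : (0:ℝ) < 2^(k:ℤ) := by positivity
  have h2mk : (0:ℝ) < 2^(-k:ℤ) := by positivity
  have hinv : (2:ℝ)^(-k:ℤ) * (2:ℝ)^(k:ℤ) = 1 := by
    rw [← zpow_add₀ (by norm_num : (2:ℝ) ≠ 0)]; simp
  have hs1 : (s:ℝ) ≤ 1 := (Set.mem_Icc.mp s.2).2
  set tr : ℝ := 2^(-k:ℤ) * ((s:ℝ) - 1) + 1 with htr
  have hub : 1 - tr ≤ min δ 1 := by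
    have : 1 - (s:ℝ) ≤ 2^(k:ℤ) * min δ 1 := by linarith
    have h4 : 1 - tr = 2^(-k:ℤ) * (1 - (s:ℝ)) := by ring
    rw [h4]
    calc 2^(-k:ℤ) * (1 - (s:ℝ)) ≤ 2^(-k:ℤ) * (2^(k:ℤ) * min δ 1) := by
          apply mul_le_mul_of_nonneg_left this (le_of_lt h2mk)
      _ = min δ 1 := by rw [← mul_assoc, hinv, one_mul]
  have htr0 : 0 ≤ tr := by
    have : min δ 1 ≤ 1 := min_le_right _ _
    linarith
  have htr1 : tr ≤ 1 := by nlinarith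
  set t0 : I := ⟨tr, Set.mem_Icc.mpr ⟨htr0, htr1⟩⟩
  have ht0δ : 1 - δ ≤ (t0:ℝ) := by
    have : min δ 1 ≤ δ := min_le_left _ _
    simp only [t0]; linarith
  have hwt0 : w t0 = s := by
    apply Subtype.ext
    rw [hf t0 ht0δ]
    show 2^(k:ℤ) * (tr - 1) + 1 = (s:ℝ)
    have : tr - 1 = 2^(-k:ℤ) * ((s:ℝ) - 1) := by ring
    rw [this, ← mul_assoc]
    rw [mul_comm ((2:ℝ)^(k:ℤ)) ((2:ℝ)^(-k:ℤ)), hinv]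
    ring
  have : w⁻¹ s = t0 := by rw [← hwt0]; exact w.symm_apply_apply t0
  rw [this]

lemma hasSl_one : HasSl 1 0 := by
  refine ⟨1, one_pos, ?_⟩
  intro t _
  simp

lemma hasSl_x0 : HasSl x₀ (-1) := by
  refine ⟨1/4, by norm_num, ?_⟩
  intro t ht
  have h1 : (t:ℝ) ≤ 1 := (Set.mem_Icc.mp t.2).2
  rw [coe_x0_apply, x0fun, if_neg (by linarith), if_neg (by linarith)]
  rw [zpow_neg, zpow_one]
  ring

lemma hasSl_x1 : HasSl x₁ (-1) := by
  refine ⟨1/8, by norm_num, ?_⟩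
  intro t ht
  have h1 : (t:ℝ) ≤ 1 := (Set.mem_Icc.mp t.2).2
  rw [coe_x1_apply, x1fun, if_neg (by linarith), if_neg (by linarith), if_neg (by linarith)]
  rw [zpow_neg, zpow_one]
  ring

lemma hasSl_x0_pow (n : ℕ) : HasSl (x₀ ^ n) (-(n:ℤ)) := by
  induction n with
  | zero => simpa using hasSl_one
  | succ m ih =>
      have := hasSl_mul ih hasSl_x0
      have e : x₀ ^ (m+1) = x₀ ^ m * x₀ := pow_succ x₀ m
      rw [e]
      convert this using 1
      push_cast; ring

lemma hasSl_x (i : ℕ) : HasSl (x i) (-1) := by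
  rcases Nat.eq_zero_or_pos i with h | h
  · rw [h, x_zero]; exact hasSl_x0
  · have e : x i = x₀ ^ (i-1) * x₁ * (x₀ ^ (i-1))⁻¹ := by
      simp [x, Nat.pos_iff_ne_zero.mp h]
    rw [e]
    have := hasSl_mul (hasSl_mul (hasSl_x0_pow (i-1)) hasSl_x1) (hasSl_inv (hasSl_x0_pow (i-1)))
    convert this using 1
    ring

lemma F_hasSl : ∀ w ∈ F, ∃ k : ℤ, HasSl w k := by
  intro w hw
  refine Subgroup.closure_induction ?_ ?_ ?_ ?_ hw
  · rintro a (h | h)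
    · exact ⟨-1, h ▸ hasSl_x 0⟩
    · rw [Set.mem_singleton_iff] at h
      exact ⟨-1, h ▸ hasSl_x 1⟩
  · exact ⟨0, hasSl_one⟩
  · rintro a b _ _ ⟨k, hk⟩ ⟨l, hl⟩
    exact ⟨k + l, hasSl_mul hk hl⟩
  · rintro a _ ⟨k, hk⟩
    exact ⟨-k, hasSl_inv hk⟩

/-- slope exponent of an element of `F`. -/
def slk (w : ↥F) : ℤ := Classical.choose (F_hasSl w.1 w.2)

lemma slk_spec (w : ↥F) : HasSl w.1 (slk w) := Classical.choose_spec (F_hasSl w.1 w.2)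

lemma slk_eq (w : ↥F) {k : ℤ} (h : HasSl w.1 k) : slk w = k :=
  hasSl_unique (slk_spec w) h

/-- The parity homomorphism. -/
def φF : ↥F →* Multiplicative (ZMod 2) :=
  MonoidHom.mk' (fun w => Multiplicative.ofAdd ((slk w : ℤ) : ZMod 2)) (by
    intro a b
    have hab : HasSl ((a*b):↥F).1 (slk a + slk b) := hasSl_mul (slk_spec a) (slk_spec b)
    have h5 : slk (a*b) = slk a + slk b := slk_eq _ hab
    show Multiplicative.ofAdd ((slk (a*b) : ℤ) : ZMod 2)
        = Multiplicative.ofAdd ((slk a : ℤ) : ZMod 2) * Multiplicative.ofAdd ((slk b : ℤ) : ZMod 2)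
    rw [h5, Int.cast_add, ofAdd_add])

lemma φF_x (i : ℕ) (h : x i ∈ F) : φF ⟨x i, h⟩ = Multiplicative.ofAdd 1 := by
  have : slk ⟨x i, h⟩ = -1 := slk_eq _ (hasSl_x i)
  show Multiplicative.ofAdd ((slk ⟨x i, h⟩ : ℤ) : ZMod 2) = Multiplicative.ofAdd 1
  rw [this]
  norm_num
  decide

lemma G_le_F : G ≤ F := by
  rw [G, Subgroup.closure_le]
  rintro a (h | h)
  · exact h ▸ mul_mem (x_mem_F 2) (x_mem_F 0)
  · rw [Set.mem_singleton_iff] at h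
    exact h ▸ mul_mem (x_mem_F 2) (x_mem_F 1)

lemma G_even_slope : ∀ w ∈ G, ∃ k : ℤ, HasSl w k ∧ Even k := by
  intro w hw
  refine Subgroup.closure_induction ?_ ?_ ?_ ?_ hw
  · rintro a (h | h)
    · subst h
      refine ⟨-2, ?_, by decide⟩
      rw [x_two, x_zero]
      have e : x₀ * x₁ * x₀⁻¹ * x₀ = x₀ * x₁ := by group
      rw [e]
      have := hasSl_mul hasSl_x0 hasSl_x1
      have he : (-2:ℤ) = -1 + -1 := by norm_num
      rw [he]; exact this
    · rw [Set.mem_singleton_iff] at h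
      subst h
      refine ⟨-2, ?_, by decide⟩
      rw [x_two, x_one]
      have := hasSl_mul (hasSl_mul (hasSl_mul hasSl_x0 hasSl_x1) (hasSl_inv hasSl_x0)) hasSl_x1
      have he : (-2:ℤ) = -1 + -1 + -(-1) + -1 := by norm_num
      rw [he]; exact this
  · exact ⟨0, hasSl_one, Even.zero⟩
  · rintro a b _ _ ⟨k, hk, hek⟩ ⟨l, hl, hel⟩
    exact ⟨k + l, hasSl_mul hk hl, hek.add hel⟩
  · rintro a _ ⟨k, hk, hek⟩
    exact ⟨-k, hasSl_inv hk, hek.neg⟩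

lemma φF_of_G {w : Equiv.Perm I} (hw : w ∈ G) (hF : w ∈ F) : φF ⟨w, hF⟩ = 1 := by
  obtain ⟨k, hk, hek⟩ := G_even_slope w hw
  have : slk ⟨w, hF⟩ = k := slk_eq _ hk
  show Multiplicative.ofAdd ((slk ⟨w, hF⟩ : ℤ) : ZMod 2) = 1
  rw [this]
  obtain ⟨m, hm⟩ := hek
  subst hm
  have hz : ((m + m : ℤ) : ZMod 2) = 0 := by
    push_cast
    rw [show ((m : ZMod 2) + (m : ZMod 2)) = 2 * (m : ZMod 2) from by ring,
      show (2 : ZMod 2) = 0 from by decide, zero_mul]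
  rw [hz]
  rfl

lemma φF_ne : (Multiplicative.ofAdd (1 : ZMod 2)) ≠ 1 := by decide

lemma mem_G_of_ker {w : Equiv.Perm I} (hF : w ∈ F) (h1 : φF ⟨w, hF⟩ = 1) : w ∈ G := by
  rcases decomp w hF with h | h
  · exact h
  · exfalso
    have hgF : x₀⁻¹ * w ∈ F := mul_mem (inv_mem (x_zero ▸ x_mem_F 0)) hF
    have hx0F : x₀ ∈ F := x_zero ▸ x_mem_F 0
    have e : (⟨w, hF⟩ : ↥F) = ⟨x₀, hx0F⟩ * ⟨x₀⁻¹ * w, hgF⟩ := by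
      apply Subtype.ext
      show w = x₀ * (x₀⁻¹ * w)
      group
    have := φF_of_G h hgF
    have hφx0 : φF ⟨x₀, hx0F⟩ = Multiplicative.ofAdd 1 := by
      have := φF_x 0 (x_mem_F 0)
      convert this using 2 <;> simp [x_zero]
    rw [e, map_mul, hφx0, this, mul_one] at h1
    exact φF_ne h1


lemma list_letters_of_mem_F {w : Equiv.Perm I} (hw : w ∈ F) :
    ∃ l : List (Equiv.Perm I), (∀ a ∈ l, ∃ i : ℕ, a = x i ∨ a = (x i)⁻¹) ∧ l.prod = w := by
  refine Subgroup.closure_induction ?_ ?_ ?_ ?_ hw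
  · rintro a (h | h)
    · exact ⟨[a], by rintro b hb; rw [List.mem_singleton] at hb; exact ⟨0, Or.inl (hb ▸ h)⟩,
        List.prod_singleton⟩
    · rw [Set.mem_singleton_iff] at h
      exact ⟨[a], by rintro b hb; rw [List.mem_singleton] at hb; exact ⟨1, Or.inl (hb ▸ h)⟩,
        List.prod_singleton⟩
  · exact ⟨[], by simp, List.prod_nil⟩
  · rintro a b _ _ ⟨l, hl, hlp⟩ ⟨m, hm, hmp⟩
    refine ⟨l ++ m, ?_, by rw [List.prod_append, hlp, hmp]⟩
    intro c hc
    rcases List.mem_append.mp hc with h | h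
    · exact hl c h
    · exact hm c h
  · rintro a _ ⟨l, hl, hlp⟩
    refine ⟨(l.map Inv.inv).reverse, ?_, ?_⟩
    · intro c hc
      rw [List.mem_reverse, List.mem_map] at hc
      obtain ⟨d, hd, hdc⟩ := hc
      obtain ⟨i, hi | hi⟩ := hl d hd
      · exact ⟨i, Or.inr (by rw [← hdc, hi])⟩
      · exact ⟨i, Or.inl (by rw [← hdc, hi, inv_inv])⟩
    · rw [← List.prod_inv_reverse, hlp]

lemma letter_mem_F {a : Equiv.Perm I} (h : ∃ i : ℕ, a = x i ∨ a = (x i)⁻¹) : a ∈ F := by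
  obtain ⟨i, hi | hi⟩ := h
  · exact hi ▸ x_mem_F i
  · exact hi ▸ inv_mem (x_mem_F i)

lemma φF_letter {a : Equiv.Perm I} (h : ∃ i : ℕ, a = x i ∨ a = (x i)⁻¹) (hF : a ∈ F) :
    φF ⟨a, hF⟩ = Multiplicative.ofAdd 1 := by
  obtain ⟨i, hi | hi⟩ := h
  · subst hi; exact φF_x i hF
  · subst hi
    have hxF : x i ∈ F := x_mem_F i
    have e : (⟨(x i)⁻¹, hF⟩ : ↥F) = (⟨x i, hxF⟩ : ↥F)⁻¹ := rfl
    rw [e, map_inv, φF_x i hxF]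
    decide

lemma φF_list (l : List (Equiv.Perm I)) (hl : ∀ a ∈ l, ∃ i : ℕ, a = x i ∨ a = (x i)⁻¹)
    (hF : l.prod ∈ F) :
    φF ⟨l.prod, hF⟩ = Multiplicative.ofAdd ((l.length : ZMod 2)) := by
  induction l with
  | nil =>
      simp only [List.prod_nil, List.length_nil, Nat.cast_zero, ofAdd_zero]
      exact map_one φF
  | cons a l ih =>
      have haF : a ∈ F := letter_mem_F (hl a (List.mem_cons_self))
      have hlF : l.prod ∈ F := by
        have : a⁻¹ * (a * l.prod) ∈ F := mul_mem (inv_mem haF) (by rw [← List.prod_cons]; exact hF)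
        simpa using this
      have e : (⟨(a :: l).prod, hF⟩ : ↥F) = ⟨a, haF⟩ * ⟨l.prod, hlF⟩ := by
        apply Subtype.ext
        simp [List.prod_cons]
      rw [e, map_mul, φF_letter (hl a (List.mem_cons_self)) haF,
        ih (fun b hb => hl b (List.mem_cons_of_mem a hb)) hlF]
      rw [← ofAdd_add]
      congr 1
      simp only [List.length_cons]
      push_cast
      ring

lemma even_iff_cast_zero (n : ℕ) : Even n ↔ ((n : ZMod 2) = 0) := by
  rw [ZMod.natCast_eq_zero_iff]
  exact even_iff_two_dvd

lemma len_set_nonempty {w : Equiv.Perm I} (hw : w ∈ F) :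
    {n | ∃ l : List (Equiv.Perm I), l.length = n ∧
      (∀ a ∈ l, ∃ i : ℕ, a = x i ∨ a = (x i)⁻¹) ∧ l.prod = w}.Nonempty := by
  obtain ⟨l, hl, hlp⟩ := list_letters_of_mem_F hw
  exact ⟨l.length, l, rfl, hl, hlp⟩

lemma φF_eq_len {w : Equiv.Perm I} (hw : w ∈ F) :
    φF ⟨w, hw⟩ = Multiplicative.ofAdd ((len w : ZMod 2)) := by
  have hne := len_set_nonempty hw
  have hmem := Nat.sInf_mem hne
  obtain ⟨l, hlen, hl, hlp⟩ := hmem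
  have : φF ⟨w, hw⟩ = φF ⟨l.prod, hlp ▸ hw⟩ := by congr 1; exact Subtype.ext hlp.symm
  rw [this, φF_list l hl (hlp ▸ hw), hlen]
  rfl

lemma main_iff {w : Equiv.Perm I} (hw : w ∈ F) : (w ∈ G ↔ Even (len w)) := by
  constructor
  · intro hG
    have h1 : φF ⟨w, hw⟩ = 1 := φF_of_G hG hw
    rw [φF_eq_len hw] at h1
    have : ((len w : ZMod 2)) = 0 := by
      have := Multiplicative.ofAdd.injective (by rw [h1]; rfl : Multiplicative.ofAdd ((len w : ZMod 2)) = Multiplicative.ofAdd (0 : ZMod 2))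
      exact this
    exact (even_iff_cast_zero _).mpr this
  · intro hev
    apply mem_G_of_ker hw
    rw [φF_eq_len hw, (even_iff_cast_zero _).mp hev]
    rfl

lemma φF_surj : Function.Surjective φF := by
  intro z
  have hall : ∀ y : Multiplicative (ZMod 2), y = 1 ∨ y = Multiplicative.ofAdd 1 := by decide
  have hz := hall z
  rcases hz with h | h
  · exact ⟨1, by rw [map_one, h]⟩
  · exact ⟨⟨x 0, x_mem_F 0⟩, by rw [φF_x 0, h]⟩

lemma ker_eq : G.subgroupOf F = φF.ker := by
  ext w
  rw [Subgroup.mem_subgroupOf, MonoidHom.mem_ker]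
  constructor
  · intro h; exact φF_of_G h w.2
  · intro h
    have := mem_G_of_ker w.2 (by convert h)
    exact this

theorem stmt1' :
    (∀ w ∈ F, (w ∈ G ↔ Even (len w))) ∧
    (∃ φ : ↥F →* Multiplicative (ZMod 2),
      φ ⟨x 0, x_mem_F 0⟩ = Multiplicative.ofAdd 1 ∧
      φ ⟨x 1, x_mem_F 1⟩ = Multiplicative.ofAdd 1 ∧
      ∀ w : ↥F, ((w : Equiv.Perm I) ∈ G ↔ w ∈ φ.ker)) ∧
    G.relIndex F = 2 := by
  refine ⟨fun w hw => main_iff hw, ⟨φF, φF_x 0 _, φF_x 1 _, ?_⟩, ?_⟩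
  · intro w
    have h := ker_eq
    rw [← h, Subgroup.mem_subgroupOf]
  · rw [Subgroup.relIndex, ker_eq, Subgroup.index_ker]
    have hrange : φF.range = ⊤ := MonoidHom.range_eq_top.mpr φF_surj
    rw [hrange]
    rw [Nat.card_congr Subgroup.topEquiv.toEquiv]
    rw [Nat.card_eq_fintype_card]
    rfl


/-- `G` consists exactly of those elements of `F` whose normal form has even length;
equivalently, `G` is the kernel of the homomorphism `F → ℤ/2ℤ` sending `x_0` and `x_1` to the
generator.  In particular, `G` has index 2 in `F`. -/
theorem stmt1 :
    (∀ w ∈ F, (w ∈ G ↔ Even (len w))) ∧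
    (∃ φ : ↥F →* Multiplicative (ZMod 2),
      φ ⟨x 0, x_mem_F 0⟩ = Multiplicative.ofAdd 1 ∧
      φ ⟨x 1, x_mem_F 1⟩ = Multiplicative.ofAdd 1 ∧
      ∀ w : ↥F, ((w : Equiv.Perm I) ∈ G ↔ w ∈ φ.ker)) ∧
    G.relIndex F = 2 := stmt1'
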